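/- arXiv:2507.04721 — 3 statements merged into one kernel-verified Lean document; each statement's English description precedes it below -/
import Mathlib

section
/- Let G = (V, E) be a connected proper interval graph with proper interval representation and edge interval ordering σ_E = (e_1, …, e_m). Let L ⊆ V and let i < m' be indices such that |N_G[e_i] ∩ L| = 2 and |N_G[e_{m'}] ∩ L| < 2, and set q = 2 − |N_G[e_{m'}] ∩ L|. Then for every edge e_j with j > m' and N_G[e_i] ∩ N_G[e_j] ≠ ∅, there is a vertex v ∈ T^q[N_G[e_{m'}] \ L] such that v ∈ N_G[e_i] ∪ N_G[e_j]; in fact every vertex of T^q[N_G[e_{m'}] \ L] lies in N_G[e_i] ∪ N_G[e_j]. -/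
open SimpleGraph

variable {V : Type*}

/-- closed neighbourhood `N_G[v]` -/
def cN (G : SimpleGraph V) (v : V) : Set V := insert v {u | G.Adj v u}

/-- closed neighbourhood `N_G[e]` of an edge given as a `Sym2`. -/
def eN (G : SimpleGraph V) (e : Sym2 V) : Set V := {w | ∃ x ∈ e, w ∈ cN G x}

/-- closed neighbourhood `N_G[e]` of an edge given as an ordered pair `e = uv`. -/
def eNp (G : SimpleGraph V) (e : V × V) : Set V := cN G e.1 ∪ cN G e.2

/-- A liar's vertex-edge dominating set. -/
def IsLiarVE (G : SimpleGraph V) (L : Set V) : Prop :=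
  (∀ e ∈ G.edgeSet, 2 ≤ (eN G e ∩ L).ncard) ∧
  (∀ e ∈ G.edgeSet, ∀ f ∈ G.edgeSet, e ≠ f → 3 ≤ ((eN G e ∪ eN G f) ∩ L).ncard)

/-- A minimum liar's vertex-edge dominating set. -/
def IsMinLiar (G : SimpleGraph V) (L : Set V) : Prop :=
  IsLiarVE G L ∧ ∀ L' : Set V, IsLiarVE G L' → L.ncard ≤ L'.ncard

/-- A proper interval representation of a graph `G`: closed intervals `[l v, r v]`,
with all `2|V|` endpoints pairwise distinct, such that two distinct vertices are
adjacent iff their intervals intersect, and no interval contains another. -/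
structure PIRep {V : Type*} (G : SimpleGraph V) where
  l : V → ℝ
  r : V → ℝ
  lr : ∀ v, l v < r v
  distinct : Function.Injective (Sum.elim l r : V ⊕ V → ℝ)
  adj_iff : ∀ u v : V, u ≠ v → (G.Adj u v ↔ (l u ≤ r v ∧ l v ≤ r u))
  proper : ∀ u v : V, u ≠ v → ¬ (l u ≤ l v ∧ r v ≤ r u)

/-- The order `<_E` on edges, written as ordered pairs `e = uv` with `r u < r v`. -/
def ltE {G : SimpleGraph V} (ρ : PIRep G) (e f : V × V) : Prop :=
  ρ.r e.2 < ρ.r f.2 ∨ (e.2 = f.2 ∧ ρ.r e.1 < ρ.r f.1)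

/-- An edge interval ordering `σ_E = (e_1, …, e_m)` of all edges of `G`,
increasing with respect to `<_E`; each edge `e_i = (u_i, v_i)` with `r u_i < r v_i`. -/
structure EdgeOrder {V : Type*} {G : SimpleGraph V} (ρ : PIRep G) where
  m : ℕ
  seq : Fin m → V × V
  adj : ∀ i, G.Adj (seq i).1 (seq i).2
  ord : ∀ i, ρ.r (seq i).1 < ρ.r (seq i).2
  surj : ∀ u v : V, G.Adj u v → ρ.r u < ρ.r v → ∃ i, seq i = (u, v)
  mono : ∀ i j, i < j → ltE ρ (seq i) (seq j)

/-- `T^q[S]`: the `q` vertices of `S` whose intervals have the largest right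
endpoints (all of `S` if `|S| ≤ q`). -/
def Tq {G : SimpleGraph V} (ρ : PIRep G) (q : ℕ) (S : Set V) : Set V :=
  {v | v ∈ S ∧ ({u | u ∈ S ∧ ρ.r v < ρ.r u}).ncard < q}

section Aux

variable {G : SimpleGraph V}

lemma PIRep.l_inj (ρ : PIRep G) : Function.Injective ρ.l := fun u v h => by
  have := ρ.distinct (a₁ := Sum.inl u) (a₂ := Sum.inl v) (by simpa using h)
  simpa using this

lemma PIRep.l_lt_l (ρ : PIRep G) {u v : V} (h : ρ.r u < ρ.r v) :
    ρ.l u < ρ.l v := by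
  have huv : u ≠ v := fun e => absurd (congrArg ρ.r e) h.ne
  rcases lt_trichotomy (ρ.l u) (ρ.l v) with h' | h' | h'
  · exact h'
  · exact absurd (ρ.l_inj h') huv
  · exact absurd ⟨h'.le, h.le⟩ (ρ.proper v u huv.symm)

lemma mem_cN_iff (ρ : PIRep G) (u x : V) :
    x ∈ cN G u ↔ ρ.l x ≤ ρ.r u ∧ ρ.l u ≤ ρ.r x := by
  rw [cN, Set.mem_insert_iff, Set.mem_setOf_eq]
  constructor
  · rintro (rfl | h)
    · exact ⟨(ρ.lr _).le, (ρ.lr _).le⟩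
    · have := (ρ.adj_iff u x h.ne).mp h
      exact ⟨this.2, this.1⟩
  · rintro ⟨h1, h2⟩
    by_cases hx : x = u
    · exact Or.inl hx
    · exact Or.inr ((ρ.adj_iff u x (Ne.symm hx)).mpr ⟨h2, h1⟩)

lemma mem_eNp_iff (ρ : PIRep G) {e : V × V}
    (hadj : G.Adj e.1 e.2) (hr : ρ.r e.1 < ρ.r e.2) (x : V) :
    x ∈ eNp G e ↔ ρ.l x ≤ ρ.r e.2 ∧ ρ.l e.1 ≤ ρ.r x := by
  have hll := ρ.l_lt_l hr
  have hadj' := (ρ.adj_iff e.1 e.2 hadj.ne).mp hadj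
  rw [eNp, Set.mem_union, mem_cN_iff ρ, mem_cN_iff ρ]
  constructor
  · rintro (⟨h1, h2⟩ | ⟨h1, h2⟩)
    · exact ⟨h1.trans hr.le, h2⟩
    · exact ⟨h1, hll.le.trans h2⟩
  · rintro ⟨h1, h2⟩
    by_cases hc : ρ.l x ≤ ρ.r e.1
    · exact Or.inl ⟨hc, h2⟩
    · push_neg at hc
      exact Or.inr ⟨h1, (hadj'.2.trans hc.le).trans (ρ.lr x).le⟩

end Aux

theorem stmt_14
    {V : Type*} [Fintype V]
    (G : SimpleGraph V) (hconn : G.Connected) (ρ : PIRep G) (σ : EdgeOrder ρ)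
    (L : Set V) (i mi : Fin σ.m) (him : i < mi)
    (h2 : (eNp G (σ.seq i) ∩ L).ncard = 2)
    (hlt : (eNp G (σ.seq mi) ∩ L).ncard < 2)
    (q : ℕ) (hq : q = 2 - (eNp G (σ.seq mi) ∩ L).ncard) :
    ∀ j : Fin σ.m, mi < j → (eNp G (σ.seq i) ∩ eNp G (σ.seq j)).Nonempty →
      (∃ v ∈ Tq ρ q (eNp G (σ.seq mi) \ L), v ∈ eNp G (σ.seq i) ∪ eNp G (σ.seq j)) ∧
      (∀ v ∈ Tq ρ q (eNp G (σ.seq mi) \ L), v ∈ eNp G (σ.seq i) ∪ eNp G (σ.seq j)) := by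
  intro j hmij hne
  obtain ⟨w, hwA, hwJ⟩ := hne
  have hAx := mem_eNp_iff ρ (σ.adj i) (σ.ord i)
  have hMx := mem_eNp_iff ρ (σ.adj mi) (σ.ord mi)
  have hJx := mem_eNp_iff ρ (σ.adj j) (σ.ord j)
  obtain ⟨hw1, hw2⟩ := (hAx w).mp hwA
  obtain ⟨hw3, hw4⟩ := (hJx w).mp hwJ
  have hds : ρ.r (σ.seq mi).2 ≤ ρ.r (σ.seq j).2 := by
    rcases σ.mono mi j hmij with h | ⟨h, _⟩
    · exact h.le
    · exact le_of_eq (congrArg ρ.r h)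
  have hlac : ρ.l (σ.seq i).1 < ρ.r (σ.seq mi).1 := by
    rcases σ.mono i mi him with h | ⟨h, h'⟩
    · have h1 := ρ.l_lt_l (σ.ord i)
      have h2 := ρ.l_lt_l h
      have h3 := ((ρ.adj_iff _ _ (σ.adj mi).ne).mp (σ.adj mi)).2
      linarith
    · have h1 := ρ.l_lt_l h'
      have h2 := ρ.lr (σ.seq mi).1
      linarith
  have hlad : ρ.l (σ.seq i).1 < ρ.r (σ.seq mi).2 := hlac.trans (σ.ord mi)
  have hcM : (σ.seq mi).1 ∈ eNp G (σ.seq mi) :=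
    (hMx _).mpr ⟨((ρ.lr _).trans (σ.ord mi)).le, (ρ.lr _).le⟩
  have hdM : (σ.seq mi).2 ∈ eNp G (σ.seq mi) :=
    (hMx _).mpr ⟨(ρ.lr _).le, ((ρ.lr _).trans (σ.ord mi)).le⟩
  have hmain : ∀ x, x ∈ eNp G (σ.seq mi) → ρ.l (σ.seq i).1 ≤ ρ.r x →
      x ∈ eNp G (σ.seq i) ∪ eNp G (σ.seq j) := by
    intro x hxM hax
    obtain ⟨hx1, hx2⟩ := (hMx x).mp hxM
    by_cases hxb : ρ.l x ≤ ρ.r (σ.seq i).2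
    · exact Or.inl ((hAx x).mpr ⟨hxb, hax⟩)
    · push_neg at hxb
      refine Or.inr ((hJx x).mpr ⟨hx1.trans hds, ?_⟩)
      by_contra hpx
      push_neg at hpx
      have hwx : w ≠ x := by
        intro e
        exact absurd (hw1.trans_lt hxb) (by rw [e]; exact lt_irrefl _)
      exact ρ.proper w x hwx ⟨(hw1.trans_lt hxb).le, hpx.le.trans hw4⟩
  have hcd : (σ.seq mi).1 ≠ (σ.seq mi).2 := (σ.adj mi).ne
  set M : Set V := eNp G (σ.seq mi) with hM
  set P : Set V := {(σ.seq mi).1, (σ.seq mi).2} with hPdef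
  have hPsubS : P \ L ⊆ M \ L := by
    rintro x ⟨hx, hxL⟩
    refine ⟨?_, hxL⟩
    rcases hx with rfl | rfl
    exacts [hcM, hdM]
  have hPcard : (P \ L).ncard = 2 - (P ∩ L).ncard := by
    rw [← Set.diff_self_inter, Set.ncard_diff Set.inter_subset_left,
      Set.ncard_pair hcd]
  have hPL : (P ∩ L).ncard ≤ (M ∩ L).ncard := by
    apply Set.ncard_le_ncard _ (Set.toFinite _)
    exact Set.inter_subset_inter_left L (fun x hx => by
      rcases hx with rfl | rfl
      exacts [hcM, hdM])
  have hTbound : ∀ v ∈ Tq ρ q (M \ L), ρ.l (σ.seq i).1 ≤ ρ.r v := by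
    rintro v ⟨hvS, hvcard⟩
    by_contra hva
    push_neg at hva
    have hsub : P \ L ⊆ {u | u ∈ M \ L ∧ ρ.r v < ρ.r u} := by
      rintro x ⟨hx, hxL⟩
      refine ⟨hPsubS ⟨hx, hxL⟩, ?_⟩
      rcases hx with rfl | rfl
      · exact hva.trans hlac
      · exact hva.trans hlad
    have hle := Set.ncard_le_ncard hsub (Set.toFinite _)
    omega
  refine ⟨?_, fun v hv => hmain v hv.1.1 (hTbound v hv)⟩
  have hSne : (M \ L).Nonempty := by
    have h0 : (P \ L).ncard ≠ 0 := by omega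
    exact Set.Nonempty.mono hPsubS (Set.nonempty_of_ncard_ne_zero h0)
  obtain ⟨x, hxS, hxmax⟩ := Set.Finite.exists_maximalFor ρ.r _ (Set.toFinite _) hSne
  have hxT : x ∈ Tq ρ q (M \ L) := by
    refine ⟨hxS, ?_⟩
    have hE : {u | u ∈ M \ L ∧ ρ.r x < ρ.r u} = ∅ := by
      ext u
      simp only [Set.mem_setOf_eq, Set.mem_empty_iff_false, iff_false, not_and]
      intro hu hlt'
      exact absurd (hxmax hu hlt'.le) (not_le.mpr hlt')
    rw [hE, Set.ncard_empty]
    omega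
  exact ⟨x, hxT, hmain x hxS.1 (hTbound x hxT)⟩
end

section
/- Let G = (V, E) be a connected proper interval graph with proper interval representation and edge interval ordering σ_E = (e_1, …, e_m), and let 1 ≤ i ≤ m. Let S ⊆ V satisfy: |N_G[e_a] ∩ S| ≥ 2 for every index a < i, and |(N_G[e_a] ∪ N_G[e_b]) ∩ S| ≥ 3 for every index a < i and every edge e_b ≠ e_a with N_G[e_a] ∩ N_G[e_b] ≠ ∅. Suppose |N_G[e_i] ∩ S| ≤ 2 and set q = 2 − |N_G[e_i] ∩ S|. If S is contained in some minimum liar's vertex-edge dominating set of G, then there exists a minimum liar's vertex-edge dominating set of G containing S ∪ T^q[N_G[e_i] \ S]. -/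
open SimpleGraph

variable {V : Type*}

section Aux

variable {G : SimpleGraph V} (ρ : PIRep G)

lemma r_inj : Function.Injective ρ.r := by
  intro x y h
  have := @ρ.distinct (Sum.inr x) (Sum.inr y) (by simpa using h)
  simpa using this

lemma l_lt_of_r_lt {x y : V} (h : ρ.r x < ρ.r y) : ρ.l x < ρ.l y := by
  have hxy : x ≠ y := fun e => absurd h (e ▸ lt_irrefl _)
  by_contra hle
  push_neg at hle
  exact ρ.proper y x hxy.symm ⟨hle, h.le⟩

lemma mem_cN (x w : V) : w ∈ cN G x ↔ (ρ.l w ≤ ρ.r x ∧ ρ.l x ≤ ρ.r w) := by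
  simp only [cN, Set.mem_insert_iff, Set.mem_setOf_eq]
  constructor
  · rintro (rfl | h)
    · exact ⟨(ρ.lr w).le, (ρ.lr w).le⟩
    · have := (ρ.adj_iff x w h.ne).1 h
      exact ⟨this.2, this.1⟩
  · rintro ⟨h1, h2⟩
    by_cases hxw : w = x
    · exact Or.inl hxw
    · exact Or.inr ((ρ.adj_iff x w (Ne.symm hxw)).2 ⟨h2, h1⟩)

lemma mem_eNp {a b : V} (hadj : G.Adj a b) (hr : ρ.r a < ρ.r b) (w : V) :
    w ∈ eNp G (a, b) ↔ (ρ.l a ≤ ρ.r w ∧ ρ.l w ≤ ρ.r b) := by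
  have hba : ρ.l b ≤ ρ.r a := ((ρ.adj_iff a b hadj.ne).1 hadj).2
  have hlab : ρ.l a < ρ.l b := l_lt_of_r_lt ρ hr
  simp only [eNp, Set.mem_union, mem_cN ρ]
  constructor
  · rintro (⟨h1, h2⟩ | ⟨h1, h2⟩)
    · exact ⟨h2, h1.trans hr.le⟩
    · exact ⟨hlab.le.trans h2, h1⟩
  · rintro ⟨h1, h2⟩
    by_cases hbw : ρ.l b ≤ ρ.r w
    · exact Or.inr ⟨h2, hbw⟩
    · push_neg at hbw
      exact Or.inl ⟨(ρ.lr w).le.trans (hbw.le.trans hba), h1⟩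

lemma eN_mk (p : V × V) : eN G (Sym2.mk p.1 p.2) = eNp G p := by
  obtain ⟨a, b⟩ := p
  ext w
  simp only [eN, eNp, Set.mem_setOf_eq, Set.mem_union, Sym2.mem_iff]
  constructor
  · rintro ⟨x, (rfl | rfl), hx⟩
    · exact Or.inl hx
    · exact Or.inr hx
  · rintro (h | h)
    · exact ⟨a, Or.inl rfl, h⟩
    · exact ⟨b, Or.inr rfl, h⟩

lemma edge_repr (σ : EdgeOrder ρ) {e : Sym2 V} (he : e ∈ G.edgeSet) :
    ∃ a : Fin σ.m, e = Sym2.mk (σ.seq a).1 (σ.seq a).2 := by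
  revert he
  induction e using Sym2.ind with
  | _ x y =>
    intro he
    have hadj : G.Adj x y := G.mem_edgeSet.1 he
    rcases lt_trichotomy (ρ.r x) (ρ.r y) with h | h | h
    · obtain ⟨a, ha⟩ := σ.surj x y hadj h
      exact ⟨a, by rw [ha]⟩
    · exact absurd (r_inj ρ h) hadj.ne
    · obtain ⟨a, ha⟩ := σ.surj y x hadj.symm h
      exact ⟨a, by rw [ha]; exact Sym2.eq_swap⟩

lemma idx_lt (σ : EdgeOrder ρ) {a i : Fin σ.m}
    (h : ρ.r (σ.seq a).2 < ρ.r (σ.seq i).2) : a < i := by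
  rcases lt_trichotomy a i with hlt | heq | hgt
  · exact hlt
  · rw [heq] at h; exact absurd h (lt_irrefl _)
  · rcases σ.mono i a hgt with h' | ⟨h2, _⟩
    · exact absurd (h.trans h') (lt_irrefl _)
    · rw [h2] at h; exact absurd h (lt_irrefl _)

lemma Tq_subset (q : ℕ) (M : Set V) : Tq ρ q M ⊆ M := fun _ hv => hv.1

lemma r_lt_of_not_Tq [Fintype V] {q : ℕ} {M : Set V} {x t : V}
    (hx : x ∈ M) (hxT : x ∉ Tq ρ q M) (ht : t ∈ Tq ρ q M) : ρ.r x < ρ.r t := by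
  classical
  have hq : ¬ ({u | u ∈ M ∧ ρ.r x < ρ.r u}).ncard < q := fun h => hxT ⟨hx, h⟩
  push_neg at hq
  by_contra hle
  push_neg at hle
  have hsub : {u | u ∈ M ∧ ρ.r x < ρ.r u} ⊆ {u | u ∈ M ∧ ρ.r t < ρ.r u} := by
    rintro u ⟨hu, hru⟩
    exact ⟨hu, lt_of_le_of_lt hle hru⟩
  have hmono : ({u | u ∈ M ∧ ρ.r x < ρ.r u}).ncard ≤ ({u | u ∈ M ∧ ρ.r t < ρ.r u}).ncard :=
    Set.ncard_le_ncard hsub (Set.toFinite _)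
  have h2 : ({u | u ∈ M ∧ ρ.r t < ρ.r u}).ncard < q := ht.2
  omega

lemma Tq_card_le [Fintype V] (q : ℕ) (M : Set V) : (Tq ρ q M).ncard ≤ q := by
  classical
  by_contra hgt
  push_neg at hgt
  have hne : (Tq ρ q M).Nonempty := by
    rw [Set.nonempty_iff_ne_empty]
    intro h
    rw [h] at hgt
    simp at hgt
  obtain ⟨t0, ht0, hmin⟩ := Set.exists_min_image (Tq ρ q M) ρ.r (Set.toFinite _) hne
  have hsub : (Tq ρ q M) \ {t0} ⊆ {u | u ∈ M ∧ ρ.r t0 < ρ.r u} := by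
    rintro t ⟨ht, ht0'⟩
    refine ⟨ht.1, lt_of_le_of_ne (hmin t ht) ?_⟩
    intro h
    exact ht0' (by simp [r_inj ρ h.symm])
  have h1 : (Tq ρ q M).ncard - 1 ≤ ({u | u ∈ M ∧ ρ.r t0 < ρ.r u}).ncard := by
    calc (Tq ρ q M).ncard - 1 = ((Tq ρ q M) \ {t0}).ncard := by
          rw [Set.ncard_diff (by simpa using ht0) (Set.toFinite _)]
          simp
      _ ≤ _ := Set.ncard_le_ncard hsub (Set.toFinite _)
  have h2 : ({u | u ∈ M ∧ ρ.r t0 < ρ.r u}).ncard < q := ht0.2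
  omega

end Aux

theorem stmt_16
    {V : Type*} [Fintype V]
    (G : SimpleGraph V) (hconn : G.Connected) (ρ : PIRep G) (σ : EdgeOrder ρ)
    (i : Fin σ.m) (S : Set V)
    (hprev2 : ∀ a : Fin σ.m, a < i → 2 ≤ (eNp G (σ.seq a) ∩ S).ncard)
    (hprev3 : ∀ a : Fin σ.m, a < i → ∀ b : Fin σ.m, σ.seq b ≠ σ.seq a →
      (eNp G (σ.seq a) ∩ eNp G (σ.seq b)).Nonempty →
      3 ≤ ((eNp G (σ.seq a) ∪ eNp G (σ.seq b)) ∩ S).ncard)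
    (hle2 : (eNp G (σ.seq i) ∩ S).ncard ≤ 2)
    (q : ℕ) (hq : q = 2 - (eNp G (σ.seq i) ∩ S).ncard)
    (hcont : ∃ L : Set V, IsMinLiar G L ∧ S ⊆ L) :
    ∃ L' : Set V, IsMinLiar G L' ∧ S ∪ Tq ρ q (eNp G (σ.seq i) \ S) ⊆ L' := by
  classical
  obtain ⟨L, hLmin, hSL⟩ := hcont
  set N : Set V := eNp G (σ.seq i) with hNdef
  set M : Set V := N \ S with hMdef
  set T : Set V := Tq ρ q M with hTdef
  by_cases hTL : T ⊆ L
  · exact ⟨L, hLmin, Set.union_subset hSL hTL⟩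
  -- the set of missing top vertices
  set K : Set V := T \ L with hKdef
  set k : ℕ := K.ncard with hkdef
  have hTsub : T ⊆ M := Tq_subset ρ q M
  have hTq : T.ncard ≤ q := Tq_card_le ρ q M
  have hKT : K ⊆ T := fun w hw => hw.1
  -- e_i is an edge
  have hmemedge : ∀ c : Fin σ.m, (Sym2.mk (σ.seq c).1 (σ.seq c).2) ∈ G.edgeSet := fun c => σ.adj c
  have hNchar : ∀ w, w ∈ N ↔ (ρ.l (σ.seq i).1 ≤ ρ.r w ∧ ρ.l w ≤ ρ.r (σ.seq i).2) :=
    fun w => mem_eNp ρ (σ.adj i) (σ.ord i) w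
  have hNL2 : 2 ≤ (N ∩ L).ncard := by
    have := hLmin.1.1 _ (hmemedge i)
    rwa [eN_mk] at this
  -- counting : q many L-vertices in N outside S
  have hdiffeq : (N ∩ L) \ S = (N ∩ L) \ (N ∩ S) := by
    ext w
    constructor
    · rintro ⟨hw, hwS⟩; exact ⟨hw, fun h => hwS h.2⟩
    · rintro ⟨hw, hwS⟩; exact ⟨hw, fun h => hwS ⟨hw.1, h⟩⟩
  have hdiff : ((N ∩ L) \ S).ncard = (N ∩ L).ncard - (N ∩ S).ncard := by
    rw [hdiffeq, Set.ncard_diff (show N ∩ S ⊆ N ∩ L from fun w hw => ⟨hw.1, hSL hw.2⟩) (Set.toFinite _)]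
  have hq' : q ≤ ((N ∩ L) \ S).ncard := by omega
  -- split (N∩L)\S into D and T∩L
  set D : Set V := ((N ∩ L) \ S) \ T with hDdef
  have hsplit : ((N ∩ L) \ S) = D ∪ (T ∩ L) := by
    ext w
    constructor
    · intro hw
      by_cases hwT : w ∈ T
      · exact Or.inr ⟨hwT, hw.1.2⟩
      · exact Or.inl ⟨hw, hwT⟩
    · rintro (⟨hw, _⟩ | ⟨hwT, hwL⟩)
      · exact hw
      · exact ⟨⟨(hTsub hwT).1, hwL⟩, (hTsub hwT).2⟩
  have hdisjDT : Disjoint D (T ∩ L) := by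
    rw [Set.disjoint_left]
    rintro w ⟨_, hwT⟩ ⟨hwT', _⟩
    exact hwT hwT'
  have hdc : ((N ∩ L) \ S).ncard = D.ncard + (T ∩ L).ncard := by
    rw [hsplit, Set.ncard_union_eq hdisjDT (Set.toFinite _) (Set.toFinite _)]
  have hTpart : T = (T ∩ L) ∪ K := by
    ext w
    constructor
    · intro hw
      by_cases hwL : w ∈ L
      · exact Or.inl ⟨hw, hwL⟩
      · exact Or.inr ⟨hw, hwL⟩
    · rintro (h | h)
      exacts [h.1, h.1]
  have hdisjTLK : Disjoint (T ∩ L) K := by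
    rw [Set.disjoint_left]
    rintro w ⟨_, hwL⟩ hwK
    exact hwK.2 hwL
  have hTcard : (T ∩ L).ncard + k = T.ncard := by
    rw [hkdef]
    rw [show T.ncard = ((T ∩ L) ∪ K).ncard from by rw [← hTpart],
      Set.ncard_union_eq hdisjTLK (Set.toFinite _) (Set.toFinite _)]
  have hDk : k ≤ D.ncard := by omega
  -- choose the vertices to remove
  obtain ⟨X, hXD, hXcard⟩ := Set.exists_subset_card_eq hDk
  have hXL : X ⊆ L := fun x hx => (hXD hx).1.1.2
  have hXM : X ⊆ M := fun x hx => show x ∈ N \ S from ⟨(hXD hx).1.1.1, (hXD hx).1.2⟩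
  have hXnT : ∀ x ∈ X, x ∉ T := fun x hx => (hXD hx).2
  have hXnS : ∀ x ∈ X, x ∉ S := fun x hx => (hXD hx).1.2
  set L' : Set V := (L \ X) ∪ K with hL'def
  have hSL' : S ⊆ L' := fun s hs => Or.inl ⟨hSL hs, fun hx => hXnS s hx hs⟩
  have hTL' : T ⊆ L' := by
    intro t ht
    by_cases htL : t ∈ L
    · exact Or.inl ⟨htL, fun hx => hXnT t hx ht⟩
    · exact Or.inr ⟨ht, htL⟩
  -- cardinality of L'
  have hcardL' : L'.ncard = L.ncard := by
    have hd : Disjoint (L \ X) K := by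
      rw [Set.disjoint_left]
      rintro w ⟨hwL, _⟩ hwK
      exact hwK.2 hwL
    have hkl : k ≤ L.ncard := hXcard ▸ Set.ncard_le_ncard hXL (Set.toFinite _)
    rw [hL'def, Set.ncard_union_eq hd (Set.toFinite _) (Set.toFinite _),
      Set.ncard_diff hXL (Set.toFinite _)]
    omega
  -- counting tricks
  have htrick0 : ∀ W : Set V, W ∩ X = ∅ → (W ∩ L).ncard ≤ (W ∩ L').ncard := by
    intro W h
    refine Set.ncard_le_ncard ?_ (Set.toFinite _)
    rintro w ⟨hwW, hwL⟩
    have hwX : w ∉ X := by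
      intro hx
      have hmem : w ∈ W ∩ X := ⟨hwW, hx⟩
      rw [h] at hmem
      exact hmem
    exact ⟨hwW, Or.inl ⟨hwL, hwX⟩⟩
  have htrick : ∀ W : Set V, K ⊆ W → (W ∩ L).ncard ≤ (W ∩ L').ncard := by
    intro W hKW
    have hsub1 : ((W ∩ L) \ X) ∪ K ⊆ W ∩ L' := by
      rintro w (⟨⟨hwW, hwL⟩, hwX⟩ | hwK)
      · exact ⟨hwW, Or.inl ⟨hwL, hwX⟩⟩
      · exact ⟨hKW hwK, Or.inr hwK⟩
    have hd : Disjoint ((W ∩ L) \ X) K := by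
      rw [Set.disjoint_left]
      rintro w ⟨⟨_, hwL⟩, _⟩ hwK
      exact hwK.2 hwL
    have h1 : (W ∩ L).ncard ≤ ((W ∩ L) \ X).ncard + X.ncard := by
      refine le_trans (Set.ncard_le_ncard ?_ (Set.toFinite _)) (Set.ncard_union_le _ _)
      intro w hw
      by_cases hwX : w ∈ X
      · exact Or.inr hwX
      · exact Or.inl ⟨hw, hwX⟩
    have h2 : (((W ∩ L) \ X) ∪ K).ncard = ((W ∩ L) \ X).ncard + k := by
      rw [Set.ncard_union_eq hd (Set.toFinite _) (Set.toFinite _)]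
    have h3 := Set.ncard_le_ncard hsub1 (Set.toFinite _)
    omega
  -- the key structural fact: an edge seeing X but missing some top vertex is early
  have key : ∀ (a' : Fin σ.m), ∀ x ∈ X, x ∈ eNp G (σ.seq a') →
      ∀ t ∈ T, t ∉ eNp G (σ.seq a') → a' < i := by
    intro a' x hxX hxE t htT htE
    have hchar := fun w => mem_eNp ρ (σ.adj a') (σ.ord a') w
    have hrxt : ρ.r x < ρ.r t := r_lt_of_not_Tq ρ (hXM hxX) (hXnT x hxX) htT
    have hx' := (hchar x).1 hxE
    rw [hchar t] at htE
    push_neg at htE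
    have h1 : ρ.l (σ.seq a').1 ≤ ρ.r t := hx'.1.trans hrxt.le
    have h2 : ρ.r (σ.seq a').2 < ρ.l t := htE h1
    have h3 : ρ.l t ≤ ρ.r (σ.seq i).2 := ((hNchar t).1 (hTsub htT).1).2
    exact idx_lt ρ σ (lt_of_lt_of_le h2 h3)
  -- first liar condition for L'
  have cond1 : ∀ e ∈ G.edgeSet, 2 ≤ (eN G e ∩ L').ncard := by
    intro e he
    obtain ⟨a, rfl⟩ := edge_repr ρ σ he
    rw [eN_mk]
    have hL2 : 2 ≤ (eNp G (σ.seq a) ∩ L).ncard := by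
      have := hLmin.1.1 _ he
      rwa [eN_mk] at this
    by_cases hx : (eNp G (σ.seq a) ∩ X).Nonempty
    · obtain ⟨x, hxE, hxX⟩ := hx
      by_cases hTN : T ⊆ eNp G (σ.seq a)
      · exact hL2.trans (htrick _ (fun t ht => hTN (hKT ht)))
      · obtain ⟨t, htT, htE⟩ := Set.not_subset.1 hTN
        have ha' := key a x hxX hxE t htT htE
        have h2 := hprev2 a ha'
        exact h2.trans (Set.ncard_le_ncard (fun w hw => ⟨hw.1, hSL' hw.2⟩) (Set.toFinite _))
    · exact hL2.trans (htrick0 _ (Set.not_nonempty_iff_eq_empty.1 hx))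
  -- second liar condition for L'
  have cond2 : ∀ e ∈ G.edgeSet, ∀ f ∈ G.edgeSet, e ≠ f →
      3 ≤ ((eN G e ∪ eN G f) ∩ L').ncard := by
    intro e he f hf hef
    obtain ⟨a, rfl⟩ := edge_repr ρ σ he
    obtain ⟨b, rfl⟩ := edge_repr ρ σ hf
    rw [eN_mk, eN_mk]
    have hab : σ.seq a ≠ σ.seq b := fun h => hef (by rw [h])
    have hL3 : 3 ≤ ((eNp G (σ.seq a) ∪ eNp G (σ.seq b)) ∩ L).ncard := by
      have := hLmin.1.2 _ he _ hf hef
      rwa [eN_mk, eN_mk] at this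
    by_cases hx : ((eNp G (σ.seq a) ∪ eNp G (σ.seq b)) ∩ X).Nonempty
    · obtain ⟨x, hxW, hxX⟩ := hx
      by_cases hTN : T ⊆ eNp G (σ.seq a) ∪ eNp G (σ.seq b)
      · exact hL3.trans (htrick _ (fun t ht => hTN (hKT ht)))
      · obtain ⟨t, htT, htW⟩ := Set.not_subset.1 hTN
        have main : ∀ (c d : Fin σ.m), σ.seq c ≠ σ.seq d →
            x ∈ eNp G (σ.seq c) → t ∉ eNp G (σ.seq c) → t ∉ eNp G (σ.seq d) →
            3 ≤ ((eNp G (σ.seq c) ∪ eNp G (σ.seq d)) ∩ L').ncard := by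
          intro c d hcd hxc htc htd
          have hci := key c x hxX hxc t htT htc
          by_cases hmeet : (eNp G (σ.seq c) ∩ eNp G (σ.seq d)).Nonempty
          · have h3 := hprev3 c hci d (fun h => hcd h.symm) hmeet
            exact h3.trans (Set.ncard_le_ncard (fun w hw => ⟨hw.1, hSL' hw.2⟩) (Set.toFinite _))
          · have hdisj : Disjoint (eNp G (σ.seq c) ∩ L') (eNp G (σ.seq d) ∩ L') := by
              rw [Set.disjoint_left]
              intro w hw1 hw2
              exact hmeet ⟨w, hw1.1, hw2.1⟩
            have h1 := cond1 _ (hmemedge c)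
            have h2 := cond1 _ (hmemedge d)
            rw [eN_mk] at h1 h2
            have hsub : (eNp G (σ.seq c) ∩ L') ∪ (eNp G (σ.seq d) ∩ L') ⊆
                (eNp G (σ.seq c) ∪ eNp G (σ.seq d)) ∩ L' := by
              rintro w (⟨hw, hwL⟩ | ⟨hw, hwL⟩)
              · exact ⟨Or.inl hw, hwL⟩
              · exact ⟨Or.inr hw, hwL⟩
            have hcard := Set.ncard_le_ncard hsub (Set.toFinite _)
            rw [Set.ncard_union_eq hdisj (Set.toFinite _) (Set.toFinite _)] at hcard
            omega
        rcases hxW with hxa | hxb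
        · exact main a b hab hxa (fun h => htW (Or.inl h)) (fun h => htW (Or.inr h))
        · have := main b a (fun h => hab h.symm) hxb
            (fun h => htW (Or.inr h)) (fun h => htW (Or.inl h))
          rwa [Set.union_comm] at this
    · exact hL3.trans (htrick0 _ (Set.not_nonempty_iff_eq_empty.1 hx))
  refine ⟨L', ⟨⟨cond1, cond2⟩, fun L'' h'' => ?_⟩, Set.union_subset hSL' hTL'⟩
  rw [hcardL']
  exact hLmin.2 L'' h''
end

section
/- Let G = (V, E) be a connected proper interval graph with proper interval representation and edge interval ordering σ_E = (e_1, …, e_m), and let 1 ≤ i ≤ m. Let S ⊆ V satisfy: |N_G[e_a] ∩ S| ≥ 2 for every index a < i; |(N_G[e_a] ∪ N_G[e_b]) ∩ S| ≥ 3 for every index a < i and every edge e_b ≠ e_a with N_G[e_a] ∩ N_G[e_b] ≠ ∅; and |N_G[e_i] ∩ S| = 2. Let m' > i be an index such that |N_G[e_{m'}] ∩ S| < 2 and |N_G[e_p] ∩ S| ≥ 3 for every p with i < p < m', and set q = 2 − |N_G[e_{m'}] ∩ S|. If S is contained in some minimum liar's vertex-edge dominating set of G, then there exists a minimum liar's vertex-edge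 dominating set of G containing S ∪ T^q[N_G[e_{m'}] \ S]. -/
open SimpleGraph

variable {V : Type*}

section Aux
variable {G : SimpleGraph V}

lemma mem_cN_iff_s17 {x w : V} : w ∈ cN G x ↔ w = x ∨ G.Adj x w := Set.mem_insert_iff

lemma r_inj_s17 (ρ : PIRep G) : Function.Injective ρ.r := fun a b h =>
  Sum.inr.inj (ρ.distinct (show Sum.elim ρ.l ρ.r (Sum.inr a) = Sum.elim ρ.l ρ.r (Sum.inr b) from h))

lemma cn_l_le (ρ : PIRep G) {x w : V} (h : w ∈ cN G x) : ρ.l x ≤ ρ.r w := by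
  rcases mem_cN_iff_s17.mp h with rfl | h
  · exact (ρ.lr w).le
  · exact ((ρ.adj_iff x w h.ne).mp h).1

lemma cn_r_ge (ρ : PIRep G) {x w : V} (h : w ∈ cN G x) : ρ.l w ≤ ρ.r x := by
  rcases mem_cN_iff_s17.mp h with rfl | h
  · exact (ρ.lr w).le
  · exact ((ρ.adj_iff x w h.ne).mp h).2

lemma cn_of (ρ : PIRep G) {x w : V} (h1 : ρ.l x ≤ ρ.r w) (h2 : ρ.l w ≤ ρ.r x) :
    w ∈ cN G x := by
  by_cases hwx : w = x
  · exact mem_cN_iff_s17.mpr (Or.inl hwx)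
  · exact mem_cN_iff_s17.mpr (Or.inr ((ρ.adj_iff x w (fun h => hwx h.symm)).mpr ⟨h1, h2⟩))

lemma key (ρ : PIRep G) {a b d t : V} (hab : G.Adj a b)
    (hd : d ∈ cN G a ∪ cN G b) (hrt : ρ.r d < ρ.r t) (hltb : ρ.l t ≤ ρ.r b) :
    t ∈ cN G a ∪ cN G b := by
  rcases hd with hd | hd
  · have h1 : ρ.l a ≤ ρ.r t := (cn_l_le ρ hd).trans hrt.le
    by_cases h2 : ρ.l t ≤ ρ.r a
    · exact Or.inl (cn_of ρ h1 h2)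
    · have hba : ρ.l b ≤ ρ.r a := ((ρ.adj_iff a b hab.ne).mp hab).2
      exact Or.inr (cn_of ρ (hba.trans ((lt_of_not_ge h2).le.trans (ρ.lr t).le)) hltb)
  · exact Or.inr (cn_of ρ ((cn_l_le ρ hd).trans hrt.le) hltb)

lemma eN_pair (a b : V) : eN G s(a, b) = eNp G (a, b) := by
  ext w
  simp only [eN, eNp, Set.mem_setOf_eq, Sym2.mem_iff, Set.mem_union]
  constructor
  · rintro ⟨x, (rfl | rfl), hx⟩
    · exact Or.inl hx
    · exact Or.inr hx
  · rintro (h | h)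
    · exact ⟨a, Or.inl rfl, h⟩
    · exact ⟨b, Or.inr rfl, h⟩

lemma eN_pair' (p : V × V) : eN G s(p.1, p.2) = eNp G p := eN_pair p.1 p.2

end Aux

theorem stmt_17
    {V : Type*} [Fintype V]
    (G : SimpleGraph V) (hconn : G.Connected) (ρ : PIRep G) (σ : EdgeOrder ρ)
    (i : Fin σ.m) (S : Set V)
    (hprev2 : ∀ a : Fin σ.m, a < i → 2 ≤ (eNp G (σ.seq a) ∩ S).ncard)
    (hprev3 : ∀ a : Fin σ.m, a < i → ∀ b : Fin σ.m, σ.seq b ≠ σ.seq a →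
      (eNp G (σ.seq a) ∩ eNp G (σ.seq b)).Nonempty →
      3 ≤ ((eNp G (σ.seq a) ∪ eNp G (σ.seq b)) ∩ S).ncard)
    (h2 : (eNp G (σ.seq i) ∩ S).ncard = 2)
    (mi : Fin σ.m) (him : i < mi)
    (hlt : (eNp G (σ.seq mi) ∩ S).ncard < 2)
    (hmid : ∀ p : Fin σ.m, i < p → p < mi → 3 ≤ (eNp G (σ.seq p) ∩ S).ncard)
    (q : ℕ) (hq : q = 2 - (eNp G (σ.seq mi) ∩ S).ncard)
    (hcont : ∃ L : Set V, IsMinLiar G L ∧ S ⊆ L) :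
    ∃ L' : Set V, IsMinLiar G L' ∧ S ∪ Tq ρ q (eNp G (σ.seq mi) \ S) ⊆ L' := by
  classical
  set N : Set V := eNp G (σ.seq mi) with hN
  set X : Set V := N \ S with hX
  have rinj := r_inj_s17 ρ
  have hidx : ∀ e ∈ G.edgeSet, ∃ k : Fin σ.m, e = s((σ.seq k).1, (σ.seq k).2) := by
    intro e he
    induction e with
    | _ a b =>
      have hab : G.Adj a b := he
      rcases lt_trichotomy (ρ.r a) (ρ.r b) with h | h | h
      · obtain ⟨k, hk⟩ := σ.surj a b hab h
        exact ⟨k, by rw [hk]⟩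
      · exact absurd (rinj h) hab.ne
      · obtain ⟨k, hk⟩ := σ.surj b a hab.symm h
        exact ⟨k, by rw [hk]; exact Sym2.eq_swap⟩
  have hle2 : ∀ {k k' : Fin σ.m}, k ≤ k' → ρ.r (σ.seq k).2 ≤ ρ.r (σ.seq k').2 := by
    intro k k' h
    rcases eq_or_lt_of_le h with rfl | h
    · exact le_refl _
    · rcases σ.mono k k' h with h | ⟨h, _⟩
      · exact h.le
      · exact le_of_eq (congrArg ρ.r h)
  obtain ⟨L, ⟨hLmin, hSL⟩, hmax⟩ :=
    Set.exists_max_image {L : Set V | IsMinLiar G L ∧ S ⊆ L}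
      (fun L => (L ∩ Tq ρ q X).ncard) (Set.toFinite _) hcont
  refine ⟨L, hLmin, Set.union_subset hSL ?_⟩
  intro t ht
  by_contra htL
  have htX : t ∈ X := ht.1
  have htN : t ∈ N := htX.1
  have htN' : t ∈ eNp G (σ.seq mi) := hN ▸ htN
  have htS : t ∉ S := htX.2
  have habove : ({w | w ∈ X ∧ ρ.r t < ρ.r w}).ncard < q := ht.2
  have hadjmi : G.Adj (σ.seq mi).1 (σ.seq mi).2 := σ.adj mi
  -- claim: l v_{m'} ≤ r t
  have hvt : ρ.l (σ.seq mi).2 ≤ ρ.r t := by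
    by_contra hcon
    push_neg at hcon
    have hu : ρ.l (σ.seq mi).2 ≤ ρ.r (σ.seq mi).1 :=
      ((ρ.adj_iff _ _ hadjmi.ne).mp hadjmi).2
    have h1 : ρ.r t < ρ.r (σ.seq mi).1 := lt_of_lt_of_le hcon hu
    have h1' : ρ.r t < ρ.r (σ.seq mi).2 := h1.trans (σ.ord mi)
    have huN : (σ.seq mi).1 ∈ N := Or.inl (mem_cN_iff_s17.mpr (Or.inl rfl))
    have hvN : (σ.seq mi).2 ∈ N := Or.inr (mem_cN_iff_s17.mpr (Or.inl rfl))
    have hpairsub : ({(σ.seq mi).1, (σ.seq mi).2} : Set V) \ S ⊆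
        {w | w ∈ X ∧ ρ.r t < ρ.r w} := by
      rintro z ⟨hz1, hz2⟩
      rcases hz1 with rfl | hz1
      · exact ⟨⟨huN, hz2⟩, h1⟩
      · rcases hz1 with rfl
        exact ⟨⟨hvN, hz2⟩, h1'⟩
    have hc1 : (({(σ.seq mi).1, (σ.seq mi).2} : Set V) ∩ S).ncard ≤ (N ∩ S).ncard := by
      refine Set.ncard_le_ncard (Set.inter_subset_inter_left S ?_) (Set.toFinite _)
      rintro z (rfl | hz)
      · exact huN
      · rcases hz with rfl
        exact hvN
    have hc2 : (({(σ.seq mi).1, (σ.seq mi).2} : Set V)).ncard = 2 :=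
      Set.ncard_pair hadjmi.ne
    have hc3 : (({(σ.seq mi).1, (σ.seq mi).2} : Set V)).ncard ≤
        (({(σ.seq mi).1, (σ.seq mi).2} : Set V) ∩ S).ncard +
        (({(σ.seq mi).1, (σ.seq mi).2} : Set V) \ S).ncard := by
      conv_lhs => rw [← Set.inter_union_diff ({(σ.seq mi).1, (σ.seq mi).2} : Set V) S]
      exact Set.ncard_union_le _ _
    have hc4 := Set.ncard_le_ncard hpairsub (Set.toFinite _)
    omega
  have hltv : ρ.l t ≤ ρ.r (σ.seq mi).2 := by
    rcases htN' with h | h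
    · exact (cn_r_ge ρ h).trans (σ.ord mi).le
    · exact cn_r_ge ρ h
  -- q ≤ |X ∩ L|
  have hedge : s((σ.seq mi).1, (σ.seq mi).2) ∈ G.edgeSet := hadjmi
  have hL2 : 2 ≤ (N ∩ L).ncard := by
    have := hLmin.1.1 _ hedge
    rwa [eN_pair'] at this
  have hXL : q ≤ (X ∩ L).ncard := by
    have hunion : N ∩ L = (N ∩ S) ∪ (X ∩ L) := by
      ext z
      constructor
      · rintro ⟨hz1, hz2⟩
        by_cases hzS : z ∈ S
        · exact Or.inl ⟨hz1, hzS⟩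
        · exact Or.inr ⟨⟨hz1, hzS⟩, hz2⟩
      · rintro (⟨hz1, hz2⟩ | ⟨⟨hz1, _⟩, hz3⟩)
        · exact ⟨hz1, hSL hz2⟩
        · exact ⟨hz1, hz3⟩
    have hdisj : Disjoint (N ∩ S) (X ∩ L) := by
      rw [Set.disjoint_left]
      rintro z ⟨_, hz2⟩ ⟨⟨_, hz4⟩, _⟩
      exact hz4 hz2
    have hcc := Set.ncard_union_eq hdisj (Set.toFinite _) (Set.toFinite _)
    rw [hunion, hcc] at hL2
    omega
  -- |Tq| ≤ q
  have hTcard : (Tq ρ q X).ncard ≤ q := by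
    by_contra hcon
    push_neg at hcon
    have hne : (Tq ρ q X).Nonempty := by
      rw [← Set.ncard_pos (Set.toFinite _)]
      omega
    obtain ⟨v0, hv0, hminv⟩ := Set.exists_min_image _ ρ.r (Set.toFinite _) hne
    have hsub : Tq ρ q X \ {v0} ⊆ {w | w ∈ X ∧ ρ.r v0 < ρ.r w} := by
      rintro z ⟨hzT, hzv⟩
      exact ⟨hzT.1, lt_of_le_of_ne (hminv z hzT) (fun h => hzv (rinj h).symm)⟩
    have hc1 := Set.ncard_le_ncard hsub (Set.toFinite _)
    have hc2 : (Tq ρ q X \ {v0}).ncard = (Tq ρ q X).ncard - 1 :=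
      Set.ncard_diff_singleton_of_mem hv0
    have hc3 := hv0.2
    omega
  -- find d
  obtain ⟨d, hdXL, hdT⟩ : ∃ d ∈ X ∩ L, d ∉ Tq ρ q X := by
    by_contra hcon
    push_neg at hcon
    have hsub : X ∩ L ⊆ Tq ρ q X \ {t} := fun z hz =>
      ⟨hcon z hz, fun h => htL (h ▸ hz.2)⟩
    have hc1 := Set.ncard_le_ncard hsub (Set.toFinite _)
    have hc2 : (Tq ρ q X \ {t}).ncard = (Tq ρ q X).ncard - 1 :=
      Set.ncard_diff_singleton_of_mem ht
    have hc4 : 0 < (Tq ρ q X).ncard := (Set.ncard_pos (Set.toFinite _)).mpr ⟨t, ht⟩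
    omega
  have hdX : d ∈ X := hdXL.1
  have hdL : d ∈ L := hdXL.2
  have hdS : d ∉ S := hdX.2
  have hrdt : ρ.r d < ρ.r t := by
    have hdq : q ≤ ({w | w ∈ X ∧ ρ.r d < ρ.r w}).ncard := by
      by_contra hcon
      push_neg at hcon
      exact hdT ⟨hdX, hcon⟩
    rcases lt_trichotomy (ρ.r d) (ρ.r t) with h | h | h
    · exact h
    · exact absurd (rinj h) (fun hh => htL (hh ▸ hdL))
    · exfalso
      have hsub : {w | w ∈ X ∧ ρ.r d < ρ.r w} ⊆ {w | w ∈ X ∧ ρ.r t < ρ.r w} :=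
        fun z hz => ⟨hz.1, h.trans hz.2⟩
      have := Set.ncard_le_ncard hsub (Set.toFinite _)
      omega
  -- the swap
  set L' : Set V := insert t (L \ {d}) with hL'
  have hSL' : S ⊆ L' := fun z hz =>
    Set.mem_insert_iff.mpr (Or.inr ⟨hSL hz, fun h => hdS (h ▸ hz)⟩)
  have hmemL' : ∀ z ∈ L, z ≠ d → z ∈ L' := fun z hz hzd =>
    Set.mem_insert_iff.mpr (Or.inr ⟨hz, hzd⟩)
  have htL' : t ∈ L' := Set.mem_insert _ _
  have hL'card : L'.ncard = L.ncard := by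
    have hc1 : t ∉ L \ {d} := fun h => htL h.1
    have hc2 : (L \ {d}).ncard = L.ncard - 1 :=
      Set.ncard_diff_singleton_of_mem hdL
    have hc3 : 0 < L.ncard := (Set.ncard_pos (Set.toFinite _)).mpr ⟨d, hdL⟩
    rw [hL', Set.ncard_insert_of_notMem hc1 (Set.toFinite _), hc2]
    omega
  have hkeyk : ∀ k : Fin σ.m, mi ≤ k → ∀ w ∈ eNp G (σ.seq k), ρ.r w < ρ.r t →
      t ∈ eNp G (σ.seq k) := by
    intro k hk w hw hr
    exact key ρ (σ.adj k) hw hr (hltv.trans (hle2 hk))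
  have hdiff : ∀ A : Set V, A.ncard ≤ (A \ {d}).ncard + 1 := by
    intro A
    have h1 : A ⊆ insert d (A \ {d}) := by
      intro z hz
      by_cases hzd : z = d
      · exact hzd ▸ Set.mem_insert _ _
      · exact Set.mem_insert_iff.mpr (Or.inr ⟨hz, hzd⟩)
    exact le_trans (Set.ncard_le_ncard h1 (Set.toFinite _)) (Set.ncard_insert_le _ _)
  have hins : ∀ (A : Set V) (n : ℕ), t ∈ A → n ≤ (A ∩ L).ncard → n ≤ (A ∩ L').ncard := by
    intro A n htA hn
    have hsub : insert t ((A ∩ L) \ {d}) ⊆ A ∩ L' := by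
      intro z hz
      rcases Set.mem_insert_iff.mp hz with rfl | ⟨⟨hz1, hz2⟩, hz3⟩
      · exact ⟨htA, htL'⟩
      · exact ⟨hz1, hmemL' z hz2 hz3⟩
    have h1 : (A ∩ L).ncard ≤ ((A ∩ L) \ {d}).ncard + 1 := hdiff _
    have h2 : (insert t ((A ∩ L) \ {d})).ncard = ((A ∩ L) \ {d}).ncard + 1 :=
      Set.ncard_insert_of_notMem (fun h => htL h.1.2) (Set.toFinite _)
    have h3 := Set.ncard_le_ncard hsub (Set.toFinite _)
    omega
  have hLone : ∀ k : Fin σ.m, 2 ≤ (eNp G (σ.seq k) ∩ L).ncard := by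
    intro k
    have := hLmin.1.1 s((σ.seq k).1, (σ.seq k).2) (σ.adj k)
    rwa [eN_pair'] at this
  -- single condition for L'
  have hsingle : ∀ e ∈ G.edgeSet, 2 ≤ (eN G e ∩ L').ncard := by
    intro e he
    obtain ⟨k, rfl⟩ := hidx e he
    rw [eN_pair']
    have hmono : (eNp G (σ.seq k) ∩ S).ncard ≤ (eNp G (σ.seq k) ∩ L').ncard :=
      Set.ncard_le_ncard (Set.inter_subset_inter_right _ hSL') (Set.toFinite _)
    rcases lt_trichotomy k mi with hk | hk | hk
    · rcases lt_trichotomy k i with hki | hki | hki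
      · exact le_trans (hprev2 k hki) hmono
      · subst hki
        exact le_trans (le_of_eq h2.symm) hmono
      · have h3 := hmid k hki hk
        omega
    · subst hk
      exact hins N 2 htN hL2
    · by_cases htk : t ∈ eNp G (σ.seq k)
      · exact hins _ 2 htk (hLone k)
      · have hdk : d ∉ eNp G (σ.seq k) := fun hdk => htk (hkeyk k hk.le d hdk hrdt)
        have hsub : eNp G (σ.seq k) ∩ L ⊆ eNp G (σ.seq k) ∩ L' :=
          fun z hz => ⟨hz.1, hmemL' z hz.2 (fun h => hdk (h ▸ hz.1))⟩
        exact le_trans (hLone k) (Set.ncard_le_ncard hsub (Set.toFinite _))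
  have hLone' : ∀ k : Fin σ.m, 2 ≤ (eNp G (σ.seq k) ∩ L').ncard := by
    intro k
    have := hsingle s((σ.seq k).1, (σ.seq k).2) (σ.adj k)
    rwa [eN_pair'] at this
  -- pair condition for L'
  have hpair : ∀ e ∈ G.edgeSet, ∀ f ∈ G.edgeSet, e ≠ f →
      3 ≤ ((eN G e ∪ eN G f) ∩ L').ncard := by
    intro e he f hf hef
    obtain ⟨ke, rfl⟩ := hidx e he
    obtain ⟨kf, rfl⟩ := hidx f hf
    rw [eN_pair', eN_pair']
    have hseqne : σ.seq ke ≠ σ.seq kf := fun h => hef (by rw [h])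
    have hLpair : 3 ≤ ((eNp G (σ.seq ke) ∪ eNp G (σ.seq kf)) ∩ L).ncard := by
      have := hLmin.1.2 _ he _ hf hef
      rwa [eN_pair', eN_pair'] at this
    by_cases htU : t ∈ eNp G (σ.seq ke) ∪ eNp G (σ.seq kf)
    · exact hins _ 3 htU hLpair
    · have ht1 : t ∉ eNp G (σ.seq ke) := fun h => htU (Or.inl h)
      have ht2 : t ∉ eNp G (σ.seq kf) := fun h => htU (Or.inr h)
      have helper1 : ∀ a b : Fin σ.m, a < i → σ.seq b ≠ σ.seq a →
          3 ≤ ((eNp G (σ.seq a) ∪ eNp G (σ.seq b)) ∩ L').ncard := by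
        intro a b ha hab
        by_cases hint : (eNp G (σ.seq a) ∩ eNp G (σ.seq b)).Nonempty
        · have h3 := hprev3 a ha b hab hint
          refine le_trans h3 (Set.ncard_le_ncard ?_ (Set.toFinite _))
          exact Set.inter_subset_inter_right _ hSL'
        · have ha2 : 2 ≤ (eNp G (σ.seq a) ∩ S).ncard := hprev2 a ha
          have hb2 : 2 ≤ (eNp G (σ.seq b) ∩ L').ncard := hLone' b
          have hdisj : Disjoint (eNp G (σ.seq a) ∩ S) (eNp G (σ.seq b) ∩ L') := by
            rw [Set.disjoint_left]
            rintro z ⟨hz1, _⟩ ⟨hz3, _⟩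
            exact hint ⟨z, hz1, hz3⟩
          have hsub : (eNp G (σ.seq a) ∩ S) ∪ (eNp G (σ.seq b) ∩ L') ⊆
              (eNp G (σ.seq a) ∪ eNp G (σ.seq b)) ∩ L' := by
            rintro z (⟨hz1, hz2⟩ | ⟨hz1, hz2⟩)
            · exact ⟨Or.inl hz1, hSL' hz2⟩
            · exact ⟨Or.inr hz1, hz2⟩
          have hcc := Set.ncard_le_ncard hsub (Set.toFinite _)
          rw [Set.ncard_union_eq hdisj (Set.toFinite _) (Set.toFinite _)] at hcc
          omega
      have helperS : ∀ a b : Fin σ.m, 3 ≤ (eNp G (σ.seq a) ∩ S).ncard →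
          3 ≤ ((eNp G (σ.seq a) ∪ eNp G (σ.seq b)) ∩ L').ncard := by
        intro a b h3
        refine le_trans h3 (Set.ncard_le_ncard ?_ (Set.toFinite _))
        rintro z ⟨hz1, hz2⟩
        exact ⟨Or.inl hz1, hSL' hz2⟩
      have helper3 : ∀ b : Fin σ.m, mi < b → t ∉ eNp G (σ.seq b) →
          3 ≤ ((eNp G (σ.seq i) ∪ eNp G (σ.seq b)) ∩ L').ncard := by
        intro b hb htb
        by_cases hBA : eNp G (σ.seq b) ∩ L' ⊆ eNp G (σ.seq i) ∩ S
        · exfalso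
          have hEq : eNp G (σ.seq b) ∩ L' = eNp G (σ.seq i) ∩ S :=
            Set.eq_of_subset_of_ncard_le hBA (by rw [h2]; exact hLone' b) (Set.toFinite _)
          have hmm : ∀ z ∈ eNp G (σ.seq i) ∩ S, z ∈ N ∩ S := by
            intro z hz
            have hzS : z ∈ S := hz.2
            have hzB : z ∈ eNp G (σ.seq b) := by
              have hzz : z ∈ eNp G (σ.seq b) ∩ L' := by rw [hEq]; exact hz
              exact hzz.1
            have hzt : z ≠ t := fun h => htS (h ▸ hzS)
            have hrz : ρ.r t < ρ.r z := by
              rcases lt_trichotomy (ρ.r z) (ρ.r t) with h | h | h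
              · exact absurd (hkeyk b hb.le z hzB h) htb
              · exact absurd (rinj h) hzt
              · exact h
            have hlz : ρ.l z ≤ ρ.r (σ.seq mi).2 := by
              rcases hz.1 with h | h
              · exact (cn_r_ge ρ h).trans ((σ.ord i).le.trans (hle2 him.le))
              · exact (cn_r_ge ρ h).trans (hle2 him.le)
            exact ⟨Or.inr (cn_of ρ (hvt.trans hrz.le) hlz), hzS⟩
          obtain ⟨s1, s2, hs12, hAeq⟩ := Set.ncard_eq_two.mp h2
          have hss : ({s1, s2} : Set V) ⊆ N ∩ S := fun z hz => hmm z (hAeq ▸ hz)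
          have hcc := Set.ncard_le_ncard hss (Set.toFinite _)
          rw [Set.ncard_pair hs12] at hcc
          omega
        · obtain ⟨z, hzB, hzA⟩ := Set.not_subset.mp hBA
          have hsub : insert z (eNp G (σ.seq i) ∩ S) ⊆
              (eNp G (σ.seq i) ∪ eNp G (σ.seq b)) ∩ L' := by
            intro w hw
            rcases Set.mem_insert_iff.mp hw with rfl | ⟨hw1, hw2⟩
            · exact ⟨Or.inr hzB.1, hzB.2⟩
            · exact ⟨Or.inl hw1, hSL' hw2⟩
          have hcard : (insert z (eNp G (σ.seq i) ∩ S)).ncard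
              = (eNp G (σ.seq i) ∩ S).ncard + 1 :=
            Set.ncard_insert_of_notMem hzA (Set.toFinite _)
          have hcc := Set.ncard_le_ncard hsub (Set.toFinite _)
          omega
      rcases lt_trichotomy ke i with hkei | hkei | hkei
      · exact helper1 ke kf hkei hseqne.symm
      · subst hkei
        rcases lt_trichotomy kf ke with hkfi | hkfi | hkfi
        · rw [Set.union_comm]
          exact helper1 kf ke hkfi hseqne
        · subst hkfi
          exact absurd rfl hseqne
        · rcases lt_trichotomy kf mi with hkfm | hkfm | hkfm
          · rw [Set.union_comm]
            exact helperS kf ke (hmid kf hkfi hkfm)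
          · subst hkfm
            exact absurd htN' ht2
          · exact helper3 kf hkfm ht2
      · rcases lt_trichotomy ke mi with hkem | hkem | hkem
        · exact helperS ke kf (hmid ke hkei hkem)
        · subst hkem
          exact absurd htN' ht1
        · rcases lt_trichotomy kf i with hkfi | hkfi | hkfi
          · rw [Set.union_comm]
            exact helper1 kf ke hkfi hseqne
          · subst hkfi
            rw [Set.union_comm]
            exact helper3 ke hkem ht1
          · rcases lt_trichotomy kf mi with hkfm | hkfm | hkfm
            · rw [Set.union_comm]
              exact helperS kf ke (hmid kf hkfi hkfm)
            · subst hkfm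
              exact absurd htN' ht2
            · have hd1 : d ∉ eNp G (σ.seq ke) := fun h => ht1 (hkeyk ke hkem.le d h hrdt)
              have hd2 : d ∉ eNp G (σ.seq kf) := fun h => ht2 (hkeyk kf hkfm.le d h hrdt)
              have hsub : (eNp G (σ.seq ke) ∪ eNp G (σ.seq kf)) ∩ L ⊆
                  (eNp G (σ.seq ke) ∪ eNp G (σ.seq kf)) ∩ L' := by
                rintro z ⟨hz1, hz2⟩
                refine ⟨hz1, hmemL' z hz2 ?_⟩
                rintro rfl
                rcases hz1 with h | h
                · exact hd1 h
                · exact hd2 h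
              exact le_trans hLpair (Set.ncard_le_ncard hsub (Set.toFinite _))
  -- conclude
  have hL'min : IsMinLiar G L' :=
    ⟨⟨hsingle, hpair⟩, fun L'' hL'' => hL'card ▸ hLmin.2 L'' hL''⟩
  have hmem : L' ∈ {L : Set V | IsMinLiar G L ∧ S ⊆ L} := ⟨hL'min, hSL'⟩
  have hle := hmax L' hmem
  have hset : L' ∩ Tq ρ q X = insert t (L ∩ Tq ρ q X) := by
    rw [hL']
    ext z
    constructor
    · rintro ⟨hz1, hz2⟩
      rcases Set.mem_insert_iff.mp hz1 with rfl | ⟨hzL, _⟩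
      · exact Set.mem_insert _ _
      · exact Set.mem_insert_iff.mpr (Or.inr ⟨hzL, hz2⟩)
    · intro hz
      rcases Set.mem_insert_iff.mp hz with rfl | ⟨hz1, hz2⟩
      · exact ⟨Set.mem_insert _ _, ht⟩
      · exact ⟨Set.mem_insert_iff.mpr (Or.inr ⟨hz1, fun h => hdT (h ▸ hz2)⟩), hz2⟩
  have hgt : (L ∩ Tq ρ q X).ncard < (L' ∩ Tq ρ q X).ncard := by
    rw [hset, Set.ncard_insert_of_notMem (fun h => htL h.1) (Set.toFinite _)]
    omega
  omega
end
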